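/- In the late-preemption causal model with binary endogenous variables ST, BT, SH, BH, BS, equations BS = BH ∨ SH, SH = ST, BH = BT ∧ ¬SH, and a context u in which ST=1 and BT=1, it holds that ST=1 CNESS-causes BS=1 w.r.t. (M,u): ST=1 NESS-causes BS=1 along the path (SH), and ST=0 does not NESS-cause BS=1 along any subpath of (SH) w.r.t. (M_{ST←0},u). -/

import Mathlib

/-!
Structural equation models (causal models) à la Pearl/Halpern, formalizing
Beckers' "The Counterfactual NESS Definition of Causation".

A causal model over a context type `Ctx` (settings of the exogenous variables),
endogenous variables `V` and values `Val` consists of finite nonempty ranges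
`R X`, structural equations `F X`, and a strong-recursiveness (acyclicity)
witness: an order `ord` such that `F X` only depends on variables of lower order.
-/

structure CausalModel (Ctx V Val : Type) where
  R : V → Finset Val
  R_nonempty : ∀ X, (R X).Nonempty
  F : V → Ctx → (V → Val) → Val
  ord : V → ℕ
  F_resp : ∀ X u s s', (∀ Y, ord Y < ord X → s Y = s' Y) → F X u s = F X u s'

namespace CausalModel

variable {Ctx V Val : Type}

/-- The unique solution of the equations in context `u` (it exists and is
unique by strong recursiveness). `(M,u) ⊨ X = x` iff `M.sol u X = x`. -/
noncomputable def sol (M : CausalModel Ctx V Val) (u : Ctx) : V → Val :=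
  fun X =>
    M.F X u (fun Y => if h : M.ord Y < M.ord X then M.sol u Y else (M.R_nonempty Y).choose)
termination_by X => M.ord X
decreasing_by exact h

/-- `M.sol u` indeed solves all the equations. -/
theorem sol_eq (M : CausalModel Ctx V Val) (u : Ctx) (X : V) :
    M.sol u X = M.F X u (M.sol u) := by
  rw [sol]
  exact M.F_resp X u _ _ (fun Y hY => dif_pos hY)

variable [DecidableEq V]

/-- `X⃗ = x⃗` (given by the set `Xs` and the assignment `xs`) is sufficient for
`E = e` w.r.t. `(M, u)`: the equation for `E` outputs `e` on every setting of the
endogenous variables (in their ranges) that agrees with `xs` on `Xs`. -/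
def Sufficient (M : CausalModel Ctx V Val) (u : Ctx) (Xs : Finset V) (xs : V → Val)
    (E : V) (e : Val) : Prop :=
  ∀ s : V → Val, (∀ Y, s Y ∈ M.R Y) → (∀ X ∈ Xs, s X = xs X) → M.F E u s = e

/-- The intervened model `M_{X⃗ ← x⃗}`: the equations of variables in `Xs` are
replaced by the constants given by `xs`. -/
def intervene (M : CausalModel Ctx V Val) (Xs : Finset V) (xs : V → Val) :
    CausalModel Ctx V Val where
  R := M.R
  R_nonempty := M.R_nonempty
  F := fun X u s => if X ∈ Xs then xs X else M.F X u s
  ord := M.ord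
  F_resp := by
    intro X u s s' h
    by_cases hX : X ∈ Xs
    · simp [hX]
    · simpa [hX] using M.F_resp X u s s' h

/-- `W⃗ = w⃗` (given by `Ws, ws`) is a witness for `C = c` directly NESS-causing
`E = e` w.r.t. `(M, u)`: `C = c` and `W⃗ = w⃗` actually hold, `{C = c} ∪ {W⃗ = w⃗}`
is sufficient for `E = e`, and `W⃗ = w⃗` alone is not. -/
def DirectNESSWith (M : CausalModel Ctx V Val) (u : Ctx) (C : V) (c : Val) (E : V) (e : Val)
    (Ws : Finset V) (ws : V → Val) : Prop :=
  M.sol u C = c ∧ (∀ W ∈ Ws, M.sol u W = ws W) ∧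
  M.Sufficient u (insert C Ws) (Function.update ws C c) E e ∧
  ¬ M.Sufficient u Ws ws E e

/-- `C = c` directly NESS-causes `E = e` w.r.t. `(M, u)`. -/
def DirectNESS (M : CausalModel Ctx V Val) (u : Ctx) (C : V) (c : Val) (E : V) (e : Val) :
    Prop :=
  ∃ (Ws : Finset V) (ws : V → Val), M.DirectNESSWith u C c E e Ws ws

/-- `C = c` NESS-causes `E = e` along the path `p = (C₁, …, Cₙ)` w.r.t. `(M, u)`:
there are values `c₁, …, cₙ` such that `C = c` directly NESS-causes `C₁ = c₁`, …,
and `Cₙ = cₙ` directly NESS-causes `E = e`. (A direct NESS-cause is a NESS-cause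
along the empty path.) -/
def NESSAlong (M : CausalModel Ctx V Val) (u : Ctx) (C : V) (c : Val) (p : List V)
    (E : V) (e : Val) : Prop :=
  ∃ cs : List Val, cs.length = p.length ∧
    List.Chain (fun a b => M.DirectNESS u a.1 a.2 b.1 b.2) (C, c) (p.zip cs ++ [(E, e)])

/-- `C = c` NESS-causes `E = e` w.r.t. `(M, u)`: there is a chain of direct
NESS-causes from `C = c` to `E = e`. -/
def NESS (M : CausalModel Ctx V Val) (u : Ctx) (C : V) (c : Val) (E : V) (e : Val) : Prop :=
  ∃ p : List V, M.NESSAlong u C c p E e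

/-- The BV definition: `C = c` NESS-causes `E = e` w.r.t. `(M, u)` and there is a
`c' ∈ R(C)` such that `C = c'` does not NESS-cause `E = e` w.r.t. `(M_{C ← c'}, u)`. -/
def BVCause (M : CausalModel Ctx V Val) (u : Ctx) (C : V) (c : Val) (E : V) (e : Val) :
    Prop :=
  M.NESS u C c E e ∧
    ∃ c' ∈ M.R C, ¬ (M.intervene {C} (fun _ => c')).NESS u C c' E e

/-- The CNESS definition: `C = c` NESS-causes `E = e` along some path `p` w.r.t.
`(M, u)` and there is a `c' ∈ R(C)` such that `C = c'` does not NESS-cause `E = e`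
along any subpath of `p` (a path all of whose variables are in `p`) w.r.t.
`(M_{C ← c'}, u)`. -/
def CNESSCause (M : CausalModel Ctx V Val) (u : Ctx) (C : V) (c : Val) (E : V) (e : Val) :
    Prop :=
  ∃ p : List V, M.NESSAlong u C c p E e ∧
    ∃ c' ∈ M.R C, ∀ p' : List V, (∀ X ∈ p', X ∈ p) →
      ¬ (M.intervene {C} (fun _ => c')).NESSAlong u C c' p' E e

/-- `E = e` is counterfactually dependent on `C = c` w.r.t. `(M, u)`:
`(M,u) ⊨ C = c ∧ E = e` and there is a `c' ∈ R(C)` with `(M,u) ⊨ [C ← c'] ¬(E = e)`. -/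
def CfDep (M : CausalModel Ctx V Val) (u : Ctx) (C : V) (c : Val) (E : V) (e : Val) : Prop :=
  M.sol u C = c ∧ M.sol u E = e ∧
    ∃ c' ∈ M.R C, (M.intervene {C} (fun _ => c')).sol u E ≠ e

/-- `E = e` is counterfactually dependent on `C = c` given the intervention
`X⃗ ← x⃗`: in `M_{X⃗ ← x⃗}` with context `u`, `C = c` and `E = e` hold, and there is
a `c' ∈ R(C)` such that additionally intervening with `C ← c'` makes `E = e` false. -/
def CfDepGiven (M : CausalModel Ctx V Val) (u : Ctx) (Xs : Finset V) (xs : V → Val)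
    (C : V) (c : Val) (E : V) (e : Val) : Prop :=
  (M.intervene Xs xs).sol u C = c ∧ (M.intervene Xs xs).sol u E = e ∧
    ∃ c' ∈ M.R C, ((M.intervene Xs xs).intervene {C} (fun _ => c')).sol u E ≠ e

/-- `Y` is a parent of `X`: the equation `F X` varies with the value of `Y`
for some context and some setting (within the ranges) of the other variables. -/
def Parent (M : CausalModel Ctx V Val) (Y X : V) : Prop :=
  ∃ (u : Ctx) (s : V → Val) (y y' : Val),
    (∀ Z, s Z ∈ M.R Z) ∧ y ∈ M.R Y ∧ y' ∈ M.R Y ∧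
    M.F X u (Function.update s Y y) ≠ M.F X u (Function.update s Y y')

end CausalModel
/-- Variables for the late-preemption model: `ST`, `BT`, `SH`, `BH`, `BS`. -/
inductive VL | ST | BT | SH | BH | BS
deriving DecidableEq

/-- The late-preemption model with equations `BS = BH ∨ SH`, `SH = ST`,
`BH = BT ∧ ¬SH`, in a context where `ST = st0` and `BT = 1`. -/
def ML (st0 : Bool) : CausalModel Unit VL Bool where
  R := fun _ => Finset.univ
  R_nonempty := fun _ => Finset.univ_nonempty
  F := fun X _ s =>
    match X with
    | .ST => st0
    | .BT => true
    | .SH => s .ST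
    | .BH => s .BT && !(s .SH)
    | .BS => s .BH || s .SH
  ord := fun X => match X with | .ST => 0 | .BT => 0 | .SH => 1 | .BH => 2 | .BS => 3
  F_resp := by
    intro X u s s' h
    cases X
    · rfl
    · rfl
    · show s VL.ST = s' VL.ST
      exact h VL.ST (by decide)
    · show (s VL.BT && !(s VL.SH)) = (s' VL.BT && !(s' VL.SH))
      rw [h VL.BT (by decide), h VL.SH (by decide)]
    · show (s VL.BH || s VL.SH) = (s' VL.BH || s' VL.SH)
      rw [h VL.BH (by decide), h VL.SH (by decide)]

private lemma chain_last {α : Type*} {R : α → α → Prop} :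
    ∀ (l : List α) (a b : α), List.Chain R a (l ++ [b]) →
      ∃ x, (x = a ∨ x ∈ l) ∧ R x b
  | [], a, b, h => ⟨a, Or.inl rfl, (List.chain_cons.mp h).1⟩
  | c :: l, a, b, h => by
    rcases List.chain_cons.mp h with ⟨_, h'⟩
    obtain ⟨x, hx, hr⟩ := chain_last l c b h'
    refine ⟨x, Or.inr ?_, hr⟩
    rcases hx with rfl | hx
    · exact List.mem_cons_self
    · exact List.mem_cons_of_mem _ hx

private abbrev MI : CausalModel Unit VL Bool :=
  (ML true).intervene {VL.ST} (fun _ => false)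

private lemma MI_sol_ST : MI.sol () VL.ST = false := by
  rw [CausalModel.sol_eq]
  simp [CausalModel.intervene]

private lemma MI_sol_BT : MI.sol () VL.BT = true := by
  rw [CausalModel.sol_eq]
  simp [CausalModel.intervene, ML]

private lemma MI_sol_SH : MI.sol () VL.SH = false := by
  rw [CausalModel.sol_eq]
  simpa [CausalModel.intervene, ML] using MI_sol_ST

private lemma MI_sol_BH : MI.sol () VL.BH = true := by
  rw [CausalModel.sol_eq]
  have : MI.F VL.BH () (MI.sol ()) = (MI.sol () VL.BT && !(MI.sol () VL.SH)) := by
    simp [CausalModel.intervene, ML]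
  rw [this, MI_sol_BT, MI_sol_SH]
  rfl

/-- `ST = x` does not directly NESS-cause `BS = true` in the intervened model:
the equation of `BS` does not depend on `ST`. -/
private lemma not_direct_ST (x : Bool) :
    ¬ MI.DirectNESS () VL.ST x VL.BS true := by
  rintro ⟨Ws, ws, hsol, hW, hsuf, hnsuf⟩
  apply hnsuf
  intro s hs hagree
  have h1 : MI.F VL.BS () (Function.update s VL.ST x) = true := by
    refine hsuf (Function.update s VL.ST x) (fun Y => ?_) (fun X hX => ?_)
    · simp [CausalModel.intervene, ML]
    · by_cases hXS : X = VL.ST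
      · subst hXS; simp [Function.update_self]
      · rw [Function.update_of_ne hXS, Function.update_of_ne hXS]
        exact hagree X ((Finset.mem_insert.mp hX).resolve_left hXS)
  have h2 : MI.F VL.BS () (Function.update s VL.ST x) = MI.F VL.BS () s := by
    simp [CausalModel.intervene, ML, Function.update]
  rw [← h2]; exact h1

/-- `SH = false` does not directly NESS-cause `BS = true` in the intervened
model. -/
private lemma not_direct_SH :
    ¬ MI.DirectNESS () VL.SH false VL.BS true := by
  rintro ⟨Ws, ws, hsol, hW, hsuf, hnsuf⟩
  by_cases hBH : VL.BH ∈ Ws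
  · apply hnsuf
    intro s hs hagree
    have hwsBH : ws VL.BH = true := by rw [← hW VL.BH hBH]; exact MI_sol_BH
    have hsBH : s VL.BH = true := by rw [hagree VL.BH hBH, hwsBH]
    have : MI.F VL.BS () s = (s VL.BH || s VL.SH) := by
      simp [CausalModel.intervene, ML]
    rw [this, hsBH]; rfl
  · set s : VL → Bool :=
      fun Z => if Z = VL.BH then false else Function.update ws VL.SH false Z with hsdef
    have hfalse : MI.F VL.BS () s = true := by
      refine hsuf s (fun Y => by simp [CausalModel.intervene, ML]) (fun X hX => ?_)
      have hXBH : X ≠ VL.BH := by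
        rintro rfl
        rcases Finset.mem_insert.mp hX with h | h
        · exact VL.noConfusion h
        · exact hBH h
      simp [hsdef, hXBH]
    have : MI.F VL.BS () s = (s VL.BH || s VL.SH) := by
      simp [CausalModel.intervene, ML]
    rw [this] at hfalse
    have h1 : s VL.BH = false := by simp [hsdef]
    have h2 : s VL.SH = false := by simp [hsdef, Function.update]
    rw [h1, h2] at hfalse
    exact Bool.noConfusion hfalse

private lemma ML_sol_ST : (ML true).sol () VL.ST = true := by
  rw [CausalModel.sol_eq]; rfl

private lemma ML_sol_SH : (ML true).sol () VL.SH = true := by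
  rw [CausalModel.sol_eq]
  exact ML_sol_ST

/-- In the late-preemption model (context with `ST = 1` and
`BT = 1`), `ST = 1` NESS-causes `BS = 1` along the path `(SH)`, `ST = 0` does not
NESS-cause `BS = 1` along any subpath of `(SH)` w.r.t. `(M_{ST ← 0}, u)`, and hence
`ST = 1` CNESS-causes `BS = 1` w.r.t. `(M, u)`. -/
theorem late_preemption_cness :
    (ML true).NESSAlong () VL.ST true [VL.SH] VL.BS true ∧
      (∀ p' : List VL, (∀ X ∈ p', X ∈ [VL.SH]) →
        ¬ ((ML true).intervene {VL.ST} (fun _ => false)).NESSAlong () VL.ST false p'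
            VL.BS true) ∧
      (ML true).CNESSCause () VL.ST true VL.BS true := by
  have hpos : (ML true).NESSAlong () VL.ST true [VL.SH] VL.BS true := by
    refine ⟨[true], rfl, ?_⟩
    refine List.Chain.cons ?_ (List.Chain.cons ?_ List.Chain.nil)
    · -- ST = true directly NESS-causes SH = true
      refine ⟨∅, fun _ => false, ML_sol_ST, by simp, ?_, ?_⟩
      · intro s hs hagree
        have : s VL.ST = true := by
          have := hagree VL.ST (Finset.mem_insert_self _ _)
          simpa [Function.update_self] using this
        simpa [ML] using this
      · intro h
        have := h (fun _ => false) (fun Y => by simp [ML]) (by simp)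
        simp [ML] at this
    · -- SH = true directly NESS-causes BS = true
      refine ⟨∅, fun _ => false, ML_sol_SH, by simp, ?_, ?_⟩
      · intro s hs hagree
        have hsh : s VL.SH = true := by
          have := hagree VL.SH (Finset.mem_insert_self _ _)
          simpa [Function.update_self] using this
        show (s VL.BH || s VL.SH) = true
        rw [hsh]; simp
      · intro h
        have := h (fun _ => false) (fun Y => by simp [ML]) (by simp)
        simp [ML] at this
  have hneg : ∀ p' : List VL, (∀ X ∈ p', X ∈ [VL.SH]) →
      ¬ MI.NESSAlong () VL.ST false p' VL.BS true := by
    rintro p' hp' ⟨cs, hlen, hchain⟩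
    obtain ⟨x, hx, hr⟩ := chain_last _ _ _ hchain
    rcases hx with rfl | hx
    · exact not_direct_ST false hr
    · have hx1 : x.1 = VL.SH := by
        have := (List.of_mem_zip hx).1
        have := hp' _ this
        simpa using this
      have hx2 : x.2 = false := by
        obtain ⟨Ws, ws, hsol, -⟩ := hr
        rw [← hsol, hx1]
        exact MI_sol_SH
      have hr' : MI.DirectNESS () VL.SH false VL.BS true := by
        rw [← hx1, ← hx2]; exact hr
      exact not_direct_SH hr'
  refine ⟨hpos, hneg, ⟨[VL.SH], hpos, false, Finset.mem_univ _, hneg⟩⟩
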